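/- Let σ ≥ 0, ϑ ≥ 0, ν₁ ∈ [0,1]. Suppose a, ã : ℕ₀ → ℝ are two bounded sequences that both satisfy Fearnhead's recursion ((n+1)/2 + σ + ϑ)·a_n = ((n+1)/2 + ϑ·ν₁)·a_{n+1} + σ·a_{n−1} for all n ≥ 1, together with the boundary conditions a₀ = ã₀ = 1 and lim_{n→∞} a_n = lim_{n→∞} ã_n = 0. Then a_n = ã_n for all n. -/

import Mathlib

open Filter

/-- Monotonicity lemma: a solution of the homogeneous recursion with
`d 0 = 0` and `0 ≤ d 1` is nonnegative and nondecreasing. -/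
lemma fearnhead_mono (σ ϑ ν₁ : ℝ) (hσ : 0 ≤ σ) (hϑ : 0 ≤ ϑ)
    (hν₀ : 0 ≤ ν₁) (hν : ν₁ ≤ 1) (d : ℕ → ℝ)
    (hrec : ∀ n : ℕ, 1 ≤ n →
      (((n : ℝ) + 1) / 2 + σ + ϑ) * d n
        = (((n : ℝ) + 1) / 2 + ϑ * ν₁) * d (n + 1) + σ * d (n - 1))
    (h0 : d 0 = 0) (h1 : 0 ≤ d 1) :
    ∀ n, 0 ≤ d n ∧ d n ≤ d (n + 1) := by
  intro n
  induction n with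
  | zero => exact ⟨le_of_eq h0.symm, by rw [h0]; exact h1⟩
  | succ n ih =>
    obtain ⟨hd, hmono⟩ := ih
    have hd1 : 0 ≤ d (n + 1) := le_trans hd hmono
    refine ⟨hd1, ?_⟩
    have hE := hrec (n + 1) (by omega)
    have hsimp : (n + 1 : ℕ) - 1 = n := by omega
    rw [hsimp] at hE
    set c : ℝ := (((n + 1 : ℕ) : ℝ) + 1) / 2 with hc
    have hcpos : 0 < c + ϑ * ν₁ := by
      have : (0 : ℝ) < c := by
        rw [hc]; positivity
      nlinarith [mul_nonneg hϑ hν₀]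
    have hq : 0 ≤ (c + ϑ * ν₁) * (d (n + 2) - d (n + 1)) := by
      have e1 : (c + ϑ * ν₁) * (d (n + 2) - d (n + 1))
          = ϑ * (1 - ν₁) * d (n + 1) + σ * (d (n + 1) - d n) := by
        nlinarith [hE]
      rw [e1]
      have t1 : 0 ≤ ϑ * (1 - ν₁) * d (n + 1) :=
        mul_nonneg (mul_nonneg hϑ (by linarith)) hd1
      have t2 : 0 ≤ σ * (d (n + 1) - d n) := mul_nonneg hσ (by linarith)
      linarith
    nlinarith [hq, hcpos]

lemma fearnhead_d1_nonpos (σ ϑ ν₁ : ℝ) (hσ : 0 ≤ σ) (hϑ : 0 ≤ ϑ)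
    (hν₀ : 0 ≤ ν₁) (hν : ν₁ ≤ 1) (d : ℕ → ℝ)
    (hrec : ∀ n : ℕ, 1 ≤ n →
      (((n : ℝ) + 1) / 2 + σ + ϑ) * d n
        = (((n : ℝ) + 1) / 2 + ϑ * ν₁) * d (n + 1) + σ * d (n - 1))
    (h0 : d 0 = 0) (hlim : Tendsto d atTop (nhds 0)) :
    d 1 ≤ 0 := by
  by_contra h
  push_neg at h
  have hmono := fearnhead_mono σ ϑ ν₁ hσ hϑ hν₀ hν d hrec h0 (le_of_lt h)
  have hge : ∀ n, 1 ≤ n → d 1 ≤ d n := by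
    intro n hn
    induction n with
    | zero => omega
    | succ n ih =>
      rcases Nat.eq_or_lt_of_le hn with h' | h'
      · exact le_of_eq (congrArg d h')
      · exact le_trans (ih (by omega)) (hmono n).2
  have : d 1 ≤ 0 := by
    refine ge_of_tendsto hlim ?_
    filter_upwards [eventually_ge_atTop 1] with n hn using hge n hn
  linarith

theorem stmt_18 (σ ϑ ν₁ : ℝ) (hσ : 0 ≤ σ) (hϑ : 0 ≤ ϑ)
    (hν₁ : ν₁ ∈ Set.Icc (0 : ℝ) 1)
    (a a' : ℕ → ℝ)
    (hbdd : ∃ C : ℝ, ∀ n, |a n| ≤ C) (hbdd' : ∃ C : ℝ, ∀ n, |a' n| ≤ C)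
    (hrec : ∀ n : ℕ, 1 ≤ n →
      (((n : ℝ) + 1) / 2 + σ + ϑ) * a n
        = (((n : ℝ) + 1) / 2 + ϑ * ν₁) * a (n + 1) + σ * a (n - 1))
    (hrec' : ∀ n : ℕ, 1 ≤ n →
      (((n : ℝ) + 1) / 2 + σ + ϑ) * a' n
        = (((n : ℝ) + 1) / 2 + ϑ * ν₁) * a' (n + 1) + σ * a' (n - 1))
    (h0 : a 0 = 1) (h0' : a' 0 = 1)
    (hlim : Tendsto a atTop (nhds 0)) (hlim' : Tendsto a' atTop (nhds 0)) :
    ∀ n, a n = a' n := by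
  obtain ⟨hν₀, hν⟩ := hν₁
  set d : ℕ → ℝ := fun n => a n - a' n with hd
  have hdrec : ∀ n : ℕ, 1 ≤ n →
      (((n : ℝ) + 1) / 2 + σ + ϑ) * d n
        = (((n : ℝ) + 1) / 2 + ϑ * ν₁) * d (n + 1) + σ * d (n - 1) := by
    intro n hn
    have h1 := hrec n hn
    have h2 := hrec' n hn
    simp only [hd]
    ring_nf
    ring_nf at h1 h2
    linarith
  have hndrec : ∀ n : ℕ, 1 ≤ n →
      (((n : ℝ) + 1) / 2 + σ + ϑ) * (-d) n
        = (((n : ℝ) + 1) / 2 + ϑ * ν₁) * (-d) (n + 1) + σ * (-d) (n - 1) := by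
    intro n hn
    have := hdrec n hn
    simp only [Pi.neg_apply]
    linarith
  have hd0 : d 0 = 0 := by simp [hd, h0, h0']
  have hdlim : Tendsto d atTop (nhds 0) := by
    simpa using hlim.sub hlim'
  have h1 : d 1 ≤ 0 :=
    fearnhead_d1_nonpos σ ϑ ν₁ hσ hϑ hν₀ hν d hdrec hd0 hdlim
  have h2 : d 1 = 0 := by
    have := fearnhead_d1_nonpos σ ϑ ν₁ hσ hϑ hν₀ hν (-d) hndrec
      (by simp [hd0]) (by have hn := hdlim.neg; rw [neg_zero] at hn; exact hn)
    simp only [Pi.neg_apply] at this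
    linarith
  -- now all d n = 0 by two-step induction
  have key : ∀ n, d n = 0 ∧ d (n + 1) = 0 := by
    intro n
    induction n with
    | zero => exact ⟨hd0, h2⟩
    | succ n ih =>
      obtain ⟨ha, hb⟩ := ih
      refine ⟨hb, ?_⟩
      have hE := hdrec (n + 1) (by omega)
      have hsimp : (n + 1 : ℕ) - 1 = n := by omega
      rw [hsimp, ha, hb] at hE
      have hcpos : (0 : ℝ) < (((n + 1 : ℕ) : ℝ) + 1) / 2 + ϑ * ν₁ := by
        have : (0 : ℝ) < (((n + 1 : ℕ) : ℝ) + 1) / 2 := by positivity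
        nlinarith [mul_nonneg hϑ hν₀]
      have : ((((n + 1 : ℕ) : ℝ) + 1) / 2 + ϑ * ν₁) * d (n + 2) = 0 := by
        linarith
      exact (mul_eq_zero.mp this).resolve_left (ne_of_gt hcpos)
  intro n
  have := (key n).1
  simp only [hd] at this
  linarith
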